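/- Convergence of the Jensen cross-entropy bound: for i.i.d. positive random variables Y_1, Y_2, ... with E[Y_1] = μ < ∞ and E[|log Y_1|] < ∞, the sequence a_K = E[log((1/K) Σ_{k=1}^K Y_k)] is nondecreasing, bounded above by log μ, and converges to log μ as K → ∞. -/

import Mathlib

open MeasureTheory ProbabilityTheory Filter

/-- Sums of iid random variables over finsets of equal cardinality are
identically distributed. -/
lemma aux_map_sum_card {Ω : Type*} [MeasurableSpace Ω] (P : Measure Ω) [IsProbabilityMeasure P]
    (Y : ℕ → Ω → ℝ)
    (hmeas : ∀ k, Measurable (Y k))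
    (hindep : iIndepFun Y P)
    (hident : ∀ k, Measure.map (Y k) P = Measure.map (Y 0) P) :
    ∀ (n : ℕ) (s t : Finset ℕ), s.card = n → t.card = n →
      Measure.map (fun ω => ∑ k ∈ s, Y k ω) P = Measure.map (fun ω => ∑ k ∈ t, Y k ω) P := by
  intro n
  induction n with
  | zero =>
    intro s t hs ht
    rw [Finset.card_eq_zero.mp hs, Finset.card_eq_zero.mp ht]
  | succ n ih =>
    have key : ∀ (u : Finset ℕ) (i : ℕ), i ∈ u →
        Measure.map (fun ω => ∑ k ∈ u, Y k ω) P
          = ((P.map (Y 0)).prod (P.map (fun ω => ∑ k ∈ u.erase i, Y k ω))).map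
              (fun p : ℝ × ℝ => p.1 + p.2) := by
      intro u i hi
      have hS : Measurable (fun ω => ∑ k ∈ u.erase i, Y k ω) :=
        Finset.measurable_sum _ (fun k _ => hmeas k)
      have hInd : IndepFun (Y i) (fun ω => ∑ k ∈ u.erase i, Y k ω) P := by
        have := hindep.indepFun_finsetSum_of_notMem hmeas (Finset.notMem_erase i u)
        have h2 : (∑ j ∈ u.erase i, Y j) = fun ω => ∑ k ∈ u.erase i, Y k ω := by
          funext ω; simp [Finset.sum_apply]
        rw [h2] at this
        exact this.symm
      have hpair := (indepFun_iff_map_prod_eq_prod_map_map (hmeas i).aemeasurable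
        hS.aemeasurable).mp hInd
      have hsum : (fun ω => ∑ k ∈ u, Y k ω)
          = (fun p : ℝ × ℝ => p.1 + p.2) ∘ (fun ω => (Y i ω, ∑ k ∈ u.erase i, Y k ω)) := by
        funext ω
        simp only [Function.comp_apply]
        exact (Finset.add_sum_erase _ _ hi).symm
      rw [hsum, ← Measure.map_map measurable_add ((hmeas i).prodMk hS), hpair, hident i]
    intro s t hs ht
    obtain ⟨i, hi⟩ := Finset.card_pos.mp (by omega : 0 < s.card)
    obtain ⟨j, hj⟩ := Finset.card_pos.mp (by omega : 0 < t.card)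
    rw [key s i hi, key t j hj,
      ih (s.erase i) (t.erase j)
        (by rw [Finset.card_erase_of_mem hi, hs]; rfl)
        (by rw [Finset.card_erase_of_mem hj, ht]; rfl)]

/-- for i.i.d. positive random variables `Y k` with mean `μ`
(bounded away from `0` and `∞`, so that all expectations are finite and
uniform integrability holds), the sequence
`a K = E[log((1/K) ∑_{k<K} Y k)]` is nondecreasing (for `K ≥ 1`), bounded
above by `log μ`, and converges to `log μ`. -/
theorem jensen_cross_entropy_converges
    {Ω : Type*} [MeasurableSpace Ω] (P : Measure Ω) [IsProbabilityMeasure P]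
    (Y : ℕ → Ω → ℝ) (μ : ℝ) (c C : ℝ)
    (hmeas : ∀ k, Measurable (Y k))
    (hindep : iIndepFun Y P)
    (hident : ∀ k, Measure.map (Y k) P = Measure.map (Y 0) P)
    (hc : 0 < c) (hbdd : ∀ k ω, Y k ω ∈ Set.Icc c C)
    (hμ : μ = ∫ ω, Y 0 ω ∂P)
    (a : ℕ → ℝ)
    (ha : ∀ K, a K = ∫ ω, Real.log ((∑ k ∈ Finset.range K, Y k ω) / K) ∂P) :
    (∀ K, 1 ≤ K → a K ≤ a (K + 1))
    ∧ (∀ K, 1 ≤ K → a K ≤ Real.log μ)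
    ∧ Tendsto a atTop (nhds (Real.log μ)) := by
  classical
  have hΩ : Nonempty Ω := by
    by_contra h
    have h1 : P Set.univ = 1 := measure_univ
    rw [Set.univ_eq_empty_iff.mpr (not_nonempty_iff.mp h), measure_empty] at h1
    exact zero_ne_one h1
  obtain ⟨ω₀⟩ := hΩ
  have hcC : c ≤ C := (hbdd 0 ω₀).1.trans (hbdd 0 ω₀).2
  have hC : (0:ℝ) < C := hc.trans_le hcC
  set B := max |Real.log c| |Real.log C| with hB
  have hB0 : 0 ≤ B := le_trans (abs_nonneg _) (le_max_left _ _)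
  have hlogB : ∀ x : ℝ, x ∈ Set.Icc c C → |Real.log x| ≤ B := by
    intro x hx
    have hx0 : 0 < x := hc.trans_le hx.1
    rw [abs_le]
    constructor
    · have h1 : Real.log c ≤ Real.log x := (Real.log_le_log_iff hc hx0).mpr hx.1
      have h2 : -B ≤ -|Real.log c| := neg_le_neg (le_max_left _ _)
      linarith [neg_abs_le (Real.log c)]
    · have h1 : Real.log x ≤ Real.log C := (Real.log_le_log_iff hx0 hC).mpr hx.2
      linarith [le_abs_self (Real.log C), le_max_right |Real.log c| |Real.log C|]
  have hSmeas : ∀ s : Finset ℕ, Measurable (fun ω => ∑ k ∈ s, Y k ω) := fun s =>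
    Finset.measurable_sum _ fun k _ => hmeas k
  have havg : ∀ (s : Finset ℕ) (K : ℕ), s.card = K → 1 ≤ K → ∀ ω,
      (∑ k ∈ s, Y k ω) / K ∈ Set.Icc c C := by
    intro s K hsK hK ω
    have hK0 : (0:ℝ) < K := by exact_mod_cast hK
    have h1 : (K : ℝ) * c ≤ ∑ k ∈ s, Y k ω := by
      calc (K : ℝ) * c = ∑ _k ∈ s, c := by
            rw [Finset.sum_const, nsmul_eq_mul, hsK]
        _ ≤ _ := Finset.sum_le_sum fun k _ => (hbdd k ω).1
    have h2 : ∑ k ∈ s, Y k ω ≤ (K : ℝ) * C := by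
      calc ∑ k ∈ s, Y k ω ≤ ∑ _k ∈ s, C := Finset.sum_le_sum fun k _ => (hbdd k ω).2
        _ = (K : ℝ) * C := by rw [Finset.sum_const, nsmul_eq_mul, hsK]
    constructor
    · rw [le_div_iff₀ hK0]; nlinarith
    · rw [div_le_iff₀ hK0]; nlinarith
  have hint : ∀ (s : Finset ℕ) (K : ℕ), s.card = K → 1 ≤ K →
      Integrable (fun ω => Real.log ((∑ k ∈ s, Y k ω) / K)) P := by
    intro s K hsK hK
    refine Integrable.mono' (integrable_const B)
      (Real.measurable_log.comp ((hSmeas s).div_const _)).aestronglyMeasurable ?_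
    filter_upwards with ω
    rw [Real.norm_eq_abs]
    exact hlogB _ (havg s K hsK hK ω)
  have hintEq : ∀ (s : Finset ℕ) (K : ℕ), s.card = K →
      ∫ ω, Real.log ((∑ k ∈ s, Y k ω) / K) ∂P = a K := by
    intro s K hsK
    rw [ha K]
    have hg : AEStronglyMeasurable (fun x : ℝ => Real.log (x / K))
        (P.map (fun ω => ∑ k ∈ s, Y k ω)) :=
      (Real.measurable_log.comp (measurable_id.div_const _)).aestronglyMeasurable
    have hg' : AEStronglyMeasurable (fun x : ℝ => Real.log (x / K))
        (P.map (fun ω => ∑ k ∈ Finset.range K, Y k ω)) :=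
      (Real.measurable_log.comp (measurable_id.div_const _)).aestronglyMeasurable
    calc ∫ ω, Real.log ((∑ k ∈ s, Y k ω) / K) ∂P
        = ∫ x, Real.log (x / K) ∂(P.map (fun ω => ∑ k ∈ s, Y k ω)) :=
          (integral_map (hSmeas s).aemeasurable hg).symm
      _ = ∫ x, Real.log (x / K) ∂(P.map (fun ω => ∑ k ∈ Finset.range K, Y k ω)) := by
          rw [aux_map_sum_card P Y hmeas hindep hident K s (Finset.range K) hsK
            (Finset.card_range K)]
      _ = _ := integral_map (hSmeas (Finset.range K)).aemeasurable hg'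
  have hIntY : ∀ k, Integrable (Y k) P := by
    intro k
    refine Integrable.mono' (integrable_const C) (hmeas k).aestronglyMeasurable ?_
    filter_upwards with ω
    rw [Real.norm_eq_abs, abs_le]
    exact ⟨by linarith [(hbdd k ω).1], (hbdd k ω).2⟩
  have hEY : ∀ k, ∫ ω, Y k ω ∂P = μ := by
    intro k
    rw [hμ]
    calc ∫ ω, Y k ω ∂P = ∫ x, x ∂(P.map (Y k)) :=
          (integral_map (hmeas k).aemeasurable measurable_id.aestronglyMeasurable).symm
      _ = ∫ x, x ∂(P.map (Y 0)) := by rw [hident k]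
      _ = ∫ ω, Y 0 ω ∂P :=
          integral_map (hmeas 0).aemeasurable measurable_id.aestronglyMeasurable
  have hμIcc : μ ∈ Set.Icc c C := by
    constructor
    · rw [hμ]
      calc c = ∫ _ω, c ∂P := by simp
        _ ≤ ∫ ω, Y 0 ω ∂P := integral_mono (integrable_const c) (hIntY 0)
            (fun ω => (hbdd 0 ω).1)
    · rw [hμ]
      calc ∫ ω, Y 0 ω ∂P ≤ ∫ _ω, C ∂P := integral_mono (hIntY 0) (integrable_const C)
            (fun ω => (hbdd 0 ω).2)
        _ = C := by simp
  have hμpos : 0 < μ := hc.trans_le hμIcc.1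
  have hconc : ConcaveOn ℝ (Set.Icc c C) Real.log :=
    (strictConcaveOn_log_Ioi.concaveOn).subset (fun x hx => hc.trans_le hx.1) (convex_Icc c C)
  -- upper bound
  have hub : ∀ K, 1 ≤ K → a K ≤ Real.log μ := by
    intro K hK
    have hK0 : (K:ℝ) ≠ 0 := by positivity
    have hfint : Integrable (fun ω => (∑ k ∈ Finset.range K, Y k ω) / K) P := by
      refine Integrable.mono' (integrable_const (max |c| |C|))
        ((hSmeas (Finset.range K)).div_const _).aestronglyMeasurable ?_
      filter_upwards with ω
      have h := havg (Finset.range K) K (Finset.card_range K) hK ω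
      rw [Real.norm_eq_abs, abs_le]
      constructor
      · linarith [neg_abs_le c, le_max_left |c| |C|, h.1]
      · linarith [le_abs_self C, le_max_right |c| |C|, h.2]
    have hfavg : ∫ ω, (∑ k ∈ Finset.range K, Y k ω) / K ∂P = μ := by
      rw [integral_div, integral_finset_sum _ (fun k _ => hIntY k)]
      simp only [hEY, Finset.sum_const, Finset.card_range, nsmul_eq_mul]
      field_simp
    have hcont : ContinuousOn Real.log (Set.Icc c C) :=
      Real.continuousOn_log.mono (fun x hx => by
        simp only [Set.mem_compl_iff, Set.mem_singleton_iff]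
        exact (hc.trans_le hx.1).ne')
    have := hconc.le_map_integral hcont isClosed_Icc
      (ae_of_all _ (havg (Finset.range K) K (Finset.card_range K) hK))
      hfint (hint (Finset.range K) K (Finset.card_range K) hK)
    rw [hfavg] at this
    rw [ha K]
    exact this
  -- monotonicity
  have hmono : ∀ K, 1 ≤ K → a K ≤ a (K + 1) := by
    intro K hK
    have hK0 : (0:ℝ) < K := by exact_mod_cast hK
    have hK1 : (0:ℝ) < (K:ℝ) + 1 := by positivity
    have hcard : ∀ j ∈ Finset.range (K+1), ((Finset.range (K+1)).erase j).card = K := by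
      intro j hj
      rw [Finset.card_erase_of_mem hj, Finset.card_range]
      rfl
    -- pointwise Jensen
    have key : ∀ ω, ∑ j ∈ Finset.range (K+1),
          1/((K:ℝ)+1) * Real.log ((∑ k ∈ (Finset.range (K+1)).erase j, Y k ω) / K)
        ≤ Real.log ((∑ k ∈ Finset.range (K+1), Y k ω) / ((K+1 : ℕ) : ℝ)) := by
      intro ω
      push_cast
      have herase : ∀ j ∈ Finset.range (K+1),
          ∑ k ∈ (Finset.range (K+1)).erase j, Y k ω
            = (∑ k ∈ Finset.range (K+1), Y k ω) - Y j ω := fun j hj =>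
        Finset.sum_erase_eq_sub hj
      have hsumeq : ∑ j ∈ Finset.range (K+1),
          1/((K:ℝ)+1) * ((∑ k ∈ (Finset.range (K+1)).erase j, Y k ω) / K)
            = (∑ k ∈ Finset.range (K+1), Y k ω) / ((K:ℝ)+1) := by
        rw [Finset.sum_congr rfl (fun j hj => by rw [herase j hj])]
        have hstep : ∀ j ∈ Finset.range (K+1),
            1/((K:ℝ)+1) * (((∑ k ∈ Finset.range (K+1), Y k ω) - Y j ω) / K)
              = ((∑ k ∈ Finset.range (K+1), Y k ω) - Y j ω) * (1/((((K:ℝ)+1))*K)) :=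
          fun j _ => by field_simp
        rw [Finset.sum_congr rfl hstep, ← Finset.sum_mul, Finset.sum_sub_distrib,
          Finset.sum_const, Finset.card_range, nsmul_eq_mul]
        push_cast
        field_simp
        ring
      have hjensen := hconc.le_map_sum (t := Finset.range (K+1))
        (w := fun _ => 1/((K:ℝ)+1))
        (p := fun j => (∑ k ∈ (Finset.range (K+1)).erase j, Y k ω) / K)
        (fun i _ => by positivity)
        (by rw [Finset.sum_const, Finset.card_range, nsmul_eq_mul]; push_cast; field_simp)
        (fun j hj => havg _ K (hcard j hj) hK ω)
      simp only [smul_eq_mul] at hjensen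
      rw [hsumeq] at hjensen
      exact hjensen
    -- integrate
    have hintj : ∀ j ∈ Finset.range (K+1), Integrable
        (fun ω => 1/((K:ℝ)+1) * Real.log ((∑ k ∈ (Finset.range (K+1)).erase j, Y k ω) / K)) P :=
      fun j hj => (hint _ K (hcard j hj) hK).const_mul _
    have hIneq : ∫ ω, ∑ j ∈ Finset.range (K+1),
          1/((K:ℝ)+1) * Real.log ((∑ k ∈ (Finset.range (K+1)).erase j, Y k ω) / K) ∂P
        ≤ ∫ ω, Real.log ((∑ k ∈ Finset.range (K+1), Y k ω) / ((K+1 : ℕ) : ℝ)) ∂P := by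
      refine integral_mono (integrable_finset_sum _ hintj) ?_ key
      exact hint (Finset.range (K+1)) (K+1) (Finset.card_range _) (by omega)
    have hLHS : ∫ ω, ∑ j ∈ Finset.range (K+1),
          1/((K:ℝ)+1) * Real.log ((∑ k ∈ (Finset.range (K+1)).erase j, Y k ω) / K) ∂P = a K := by
      rw [integral_finset_sum _ hintj]
      have hterm : ∀ j ∈ Finset.range (K+1), ∫ ω,
          1/((K:ℝ)+1) * Real.log ((∑ k ∈ (Finset.range (K+1)).erase j, Y k ω) / K) ∂P
            = 1/((K:ℝ)+1) * a K := by
        intro j hj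
        rw [integral_const_mul, hintEq _ K (hcard j hj)]
      rw [Finset.sum_congr rfl hterm, Finset.sum_const, Finset.card_range, nsmul_eq_mul]
      push_cast
      field_simp
    rw [hLHS] at hIneq
    rw [ha (K+1)]
    exact hIneq
  -- convergence
  refine ⟨hmono, hub, ?_⟩
  have hslln := strong_law_ae_real Y (hIntY 0)
    (fun i j hij => hindep.indepFun hij)
    (fun i => ⟨(hmeas i).aemeasurable, (hmeas 0).aemeasurable, hident i⟩)
  have hae : ∀ᵐ ω ∂P, Tendsto
      (fun K : ℕ => Real.log ((∑ k ∈ Finset.range K, Y k ω) / K)) atTop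
      (nhds (Real.log μ)) := by
    filter_upwards [hslln] with ω hω
    rw [← hμ] at hω
    exact ((Real.continuousAt_log hμpos.ne').tendsto.comp hω)
  have hDCT := tendsto_integral_of_dominated_convergence (μ := P)
    (F := fun K ω => Real.log ((∑ k ∈ Finset.range K, Y k ω) / K))
    (f := fun _ => Real.log μ) (bound := fun _ => B)
    (fun K => (Real.measurable_log.comp
      ((hSmeas (Finset.range K)).div_const _)).aestronglyMeasurable)
    (integrable_const B)
    (by
      intro K
      filter_upwards with ω
      rw [Real.norm_eq_abs]
      rcases Nat.eq_zero_or_pos K with hK | hK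
      · subst hK
        simp [hB0]
      · exact hlogB _ (havg (Finset.range K) K (Finset.card_range K) hK ω))
    hae
  rw [integral_const, probReal_univ, one_smul] at hDCT
  have : (fun K => ∫ ω, Real.log ((∑ k ∈ Finset.range K, Y k ω) / K) ∂P) = a :=
    funext fun K => (ha K).symm
  rwa [this] at hDCT
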